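/- Capacity of RIR_max (Corollary 2): for all integers N ≥ 2 and K ≥ 1, the supremum of the rate R = L_w/(N·L_x) over all RIR_max schemes with K messages and N databases equals C_K(N) = (1 + 1/N + 1/N² + ⋯ + 1/N^{K−1})^{−1}, and this supremum is attained; in particular the capacity of RIR_max equals the capacity of PIR_max. -/

import Mathlib

open scoped BigOperators

noncomputable section

/-- A finite probability space: a finite type together with a probability mass function. -/
structure FinProbSpace where
  Ω : Type
  [fin : Fintype Ω]
  p : Ω → ℝ
  nonneg : ∀ ω, 0 ≤ p ω
  sum_one : ∑ ω, p ω = 1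

attribute [instance] FinProbSpace.fin

namespace FinProbSpace

variable (P : FinProbSpace)

/-- Probability that the random variable `X` takes the value `a`. -/
def prob {α : Type} [DecidableEq α] (X : P.Ω → α) (a : α) : ℝ :=
  ∑ ω, if X ω = a then P.p ω else 0

/-- Shannon entropy (in bits) of a finitely valued random variable. -/
def H {α : Type} [Fintype α] [DecidableEq α] (X : P.Ω → α) : ℝ :=
  ∑ a, -(P.prob X a * Real.logb 2 (P.prob X a))

/-- Conditional Shannon entropy `H(X | Y) = H(X, Y) - H(Y)` (in bits). -/
def condH {α β : Type} [Fintype α] [DecidableEq α] [Fintype β] [DecidableEq β]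
    (X : P.Ω → α) (Y : P.Ω → β) : ℝ :=
  P.H (fun ω => (X ω, Y ω)) - P.H Y

/-- The tuple random variable `(X_i)_{i ∈ ι}`. -/
def tuple {ι V : Type} (X : ι → P.Ω → V) : P.Ω → ι → V := fun ω i => X i ω

/-- Joint (mutual) independence of a finite family of random variables. -/
def iIndep {ι V : Type} [Fintype ι] [DecidableEq ι] [DecidableEq V] (X : ι → P.Ω → V) : Prop :=
  ∀ a : ι → V, P.prob (P.tuple X) a = ∏ i, P.prob (X i) (a i)

/-- `X` and `Y` contain the same information about everything beyond `Z`: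
`H(X | Y, Z) = H(Y | X, Z) = 0`. -/
def sameInfo {α β γ : Type} [Fintype α] [DecidableEq α] [Fintype β] [DecidableEq β]
    [Fintype γ] [DecidableEq γ] (X : P.Ω → α) (Y : P.Ω → β) (Z : P.Ω → γ) : Prop :=
  P.condH X (fun ω => (Y ω, Z ω)) = 0 ∧ P.condH Y (fun ω => (X ω, Z ω)) = 0

end FinProbSpace

/-- A locally decodable code with `K` source symbols of entropy `Lw`, `M` coded symbols of
entropy `Lx`, and locality `N`. -/
structure LDC (K N M : ℕ) (Lw Lx : ℝ) where
  P : FinProbSpace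
  V : Type
  [fV : Fintype V]
  [dV : DecidableEq V]
  V' : Type
  [fV' : Fintype V']
  [dV' : DecidableEq V']
  /-- the source symbols -/
  W : Fin K → P.Ω → V
  /-- the coded symbols -/
  X : Fin M → P.Ω → V'
  indep : P.iIndep W
  HW : ∀ k, P.H (W k) = Lw
  coded_fn : ∀ m, ∃ f : (Fin K → V) → V', ∀ ω, X m ω = f (fun k => W k ω)
  HX : ∀ m, P.H (X m) = Lx
  /-- the decoding supersets -/
  decSets : Fin K → Finset (Finset (Fin M))
  decSets_nonempty : ∀ k, (decSets k).Nonempty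
  decSets_card : ∀ k, ∀ s ∈ decSets k, s.card = N
  decodes : ∀ k, ∀ s ∈ decSets k,
    P.condH (W k) (P.tuple fun i : {x // x ∈ s} => X i.1) = 0

attribute [instance] LDC.fV LDC.dV LDC.fV' LDC.dV'

/-- A universal LDC: every coded symbol appears in some decoding set of every source symbol. -/
def LDC.IsUniversal {K N M : ℕ} {Lw Lx : ℝ} (C : LDC K N M Lw Lx) : Prop :=
  ∀ (m : Fin M) (k : Fin K), ∃ s ∈ C.decSets k, m ∈ s

/-- A perfectly smooth LDC: for each source symbol, every coded symbol lies in the same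
number of decoding sets. -/
def LDC.IsSmooth {K N M : ℕ} {Lw Lx : ℝ} (C : LDC K N M Lw Lx) : Prop :=
  ∀ (k : Fin K) (m m' : Fin M),
    ((C.decSets k).filter (fun s => m ∈ s)).card =
      ((C.decSets k).filter (fun s => m' ∈ s)).card

/-- `C*(N, K) = N (1 + 1/N + ⋯ + 1/N^{K-1})⁻¹`. -/
def Cstar (N K : ℕ) : ℝ := N / (∑ j ∈ Finset.range K, (1 / (N : ℝ)) ^ j)

/-- An `N`-query information retrieval scheme with `K` messages of entropy `Lw` and
answer sets of sizes `Mn n` with answers of entropy `Lx`. -/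
structure IRScheme (K N : ℕ) (Mn : Fin N → ℕ) (Lw Lx : ℝ) where
  P : FinProbSpace
  V : Type
  [fV : Fintype V]
  [dV : DecidableEq V]
  V' : Type
  [fV' : Fintype V']
  [dV' : DecidableEq V']
  /-- the messages -/
  W : Fin K → P.Ω → V
  /-- `A n m` is the `m`-th possible answer of database `n` -/
  A : (n : Fin N) → Fin (Mn n) → P.Ω → V'
  indep : P.iIndep W
  HW : ∀ k, P.H (W k) = Lw
  ans_fn : ∀ n m, ∃ f : (Fin K → V) → V', ∀ ω, A n m ω = f (fun k => W k ω)
  HA : ∀ n m, P.H (A n m) = Lx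
  /-- the decoding supersets: each decoding set consists of one answer index per database -/
  Q : Fin K → Finset ((n : Fin N) → Fin (Mn n))
  Q_nonempty : ∀ k, (Q k).Nonempty
  decodes : ∀ k, ∀ q ∈ Q k, P.condH (W k) (P.tuple fun n => A n (q n)) = 0

attribute [instance] IRScheme.fV IRScheme.dV IRScheme.fV' IRScheme.dV'

/-- A repudiative (RIR_max) scheme: every possible answer of every database appears in some
decoding set of every message. -/
def IRScheme.IsRIR {K N : ℕ} {Mn : Fin N → ℕ} {Lw Lx : ℝ} (C : IRScheme K N Mn Lw Lx) : Prop :=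
  ∀ (n : Fin N) (m : Fin (Mn n)) (k : Fin K), ∃ q ∈ C.Q k, q n = m

/-- A perfectly private (PIR_max) scheme: for each message there is a distribution on its
decoding sets such that the marginal distribution of the query to each database does not
depend on the message. -/
def IRScheme.IsPIR {K N : ℕ} {Mn : Fin N → ℕ} {Lw Lx : ℝ} (C : IRScheme K N Mn Lw Lx) : Prop :=
  ∃ μ : Fin K → ((n : Fin N) → Fin (Mn n)) → ℝ,
    (∀ k q, 0 ≤ μ k q) ∧ (∀ k, ∑ q ∈ C.Q k, μ k q = 1) ∧
    (∀ (k k' : Fin K) (n : Fin N) (m : Fin (Mn n)),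
      ∑ q ∈ (C.Q k).filter (fun q => q n = m), μ k q =
        ∑ q ∈ (C.Q k').filter (fun q => q n = m), μ k' q)

/-- `C_K(N) = (1 + 1/N + ⋯ + 1/N^{K-1})⁻¹`, the capacity of PIR. -/
def CK (N K : ℕ) : ℝ := (∑ j ∈ Finset.range K, (1 / (N : ℝ)) ^ j)⁻¹

namespace FinProbSpace

open Finset Real

variable (P : FinProbSpace)

/-- Natural-log entropy. -/
noncomputable def Hn {α : Type} [Fintype α] [DecidableEq α] (X : P.Ω → α) : ℝ :=
  ∑ a, Real.negMulLog (P.prob X a)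

variable {P}

lemma prob_nonneg {α : Type} [DecidableEq α] (X : P.Ω → α) (a : α) : 0 ≤ P.prob X a := by
  refine Finset.sum_nonneg fun ω _ => ?_
  split <;> simp [P.nonneg]

lemma sum_prob {α : Type} [Fintype α] [DecidableEq α] (X : P.Ω → α) :
    ∑ a, P.prob X a = 1 := by
  rw [← P.sum_one]
  unfold FinProbSpace.prob
  rw [Finset.sum_comm]
  refine Finset.sum_congr rfl fun ω _ => ?_
  rw [Finset.sum_ite_eq univ (X ω) (fun _ => P.p ω)]
  simp

lemma prob_le_one {α : Type} [Fintype α] [DecidableEq α] (X : P.Ω → α) (a : α) :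
    P.prob X a ≤ 1 := by
  rw [← sum_prob X]
  exact Finset.single_le_sum (fun b _ => prob_nonneg X b) (mem_univ a)

/-- Marginalization: the distribution of `f ∘ X` is obtained by summing over fibers. -/
lemma prob_comp {α β : Type} [Fintype α] [DecidableEq α] [DecidableEq β]
    {X : P.Ω → α} {Y : P.Ω → β} (f : α → β) (hY : ∀ ω, Y ω = f (X ω)) (b : β) :
    P.prob Y b = ∑ a ∈ univ.filter (fun a => f a = b), P.prob X a := by
  unfold FinProbSpace.prob
  rw [Finset.sum_comm]
  refine Finset.sum_congr rfl fun ω _ => ?_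
  rw [Finset.sum_ite_eq (univ.filter (fun a => f a = b)) (X ω) (fun _ => P.p ω)]
  simp [hY ω, eq_comm]

lemma H_eq_Hn {α : Type} [Fintype α] [DecidableEq α] (X : P.Ω → α) :
    P.H X = (Real.log 2)⁻¹ * P.Hn X := by
  unfold FinProbSpace.H FinProbSpace.Hn
  rw [Finset.mul_sum]
  refine Finset.sum_congr rfl fun a _ => ?_
  rw [Real.negMulLog, Real.logb]
  ring

lemma negMulLog_sum_le {α : Type} (s : Finset α) (g : α → ℝ) (hg : ∀ a ∈ s, 0 ≤ g a) :
    Real.negMulLog (∑ a ∈ s, g a) ≤ ∑ a ∈ s, Real.negMulLog (g a) := by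
  have hkey : Real.negMulLog (∑ a ∈ s, g a)
      = ∑ a ∈ s, -(g a * Real.log (∑ b ∈ s, g b)) := by
    rw [Real.negMulLog, neg_mul, Finset.sum_mul, ← Finset.sum_neg_distrib]
  rw [hkey]
  refine Finset.sum_le_sum fun a ha => ?_
  rw [Real.negMulLog, neg_mul, neg_le_neg_iff]
  rcases eq_or_lt_of_le (hg a ha) with h0 | hpos
  · simp [← h0]
  · have hle : g a ≤ ∑ b ∈ s, g b := Finset.single_le_sum hg ha
    exact mul_le_mul_of_nonneg_left (Real.log_le_log hpos hle) (le_of_lt hpos)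

/-- Data processing: `H (f ∘ X) ≤ H X`, natural-log version. -/
lemma Hn_comp_le {α β : Type} [Fintype α] [DecidableEq α] [Fintype β] [DecidableEq β]
    {X : P.Ω → α} {Y : P.Ω → β} (f : α → β) (hY : ∀ ω, Y ω = f (X ω)) :
    P.Hn Y ≤ P.Hn X := by
  unfold FinProbSpace.Hn
  rw [← Finset.sum_fiberwise univ f (fun a => Real.negMulLog (P.prob X a))]
  refine Finset.sum_le_sum fun b _ => ?_
  rw [prob_comp f hY b]
  exact negMulLog_sum_le _ _ (fun a _ => prob_nonneg X a)

lemma Hn_congr {α β : Type} [Fintype α] [DecidableEq α] [Fintype β] [DecidableEq β]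
    {X : P.Ω → α} {Y : P.Ω → β} (f : α → β) (g : β → α)
    (hY : ∀ ω, Y ω = f (X ω)) (hX : ∀ ω, X ω = g (Y ω)) :
    P.Hn X = P.Hn Y :=
  le_antisymm (Hn_comp_le g hX) (Hn_comp_le f hY)

lemma H_comp_le {α β : Type} [Fintype α] [DecidableEq α] [Fintype β] [DecidableEq β]
    {X : P.Ω → α} {Y : P.Ω → β} (f : α → β) (hY : ∀ ω, Y ω = f (X ω)) :
    P.H Y ≤ P.H X := by
  rw [H_eq_Hn, H_eq_Hn]
  have h2 : (0:ℝ) ≤ (Real.log 2)⁻¹ := by positivity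
  exact mul_le_mul_of_nonneg_left (Hn_comp_le f hY) h2

lemma H_congr {α β : Type} [Fintype α] [DecidableEq α] [Fintype β] [DecidableEq β]
    {X : P.Ω → α} {Y : P.Ω → β} (f : α → β) (g : β → α)
    (hY : ∀ ω, Y ω = f (X ω)) (hX : ∀ ω, X ω = g (Y ω)) :
    P.H X = P.H Y :=
  le_antisymm (H_comp_le g hX) (H_comp_le f hY)

lemma H_nonneg {α : Type} [Fintype α] [DecidableEq α] (X : P.Ω → α) : 0 ≤ P.H X := by
  refine Finset.sum_nonneg fun a _ => ?_
  have h0 := prob_nonneg X a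
  have h1 := prob_le_one X a
  have : P.prob X a * Real.logb 2 (P.prob X a) ≤ 0 := by
    rcases eq_or_lt_of_le h0 with h | h
    · simp [← h]
    · exact mul_nonpos_of_nonneg_of_nonpos (le_of_lt h) (Real.logb_nonpos one_lt_two h0 h1)
  linarith

lemma H_const {α : Type} [Fintype α] [DecidableEq α] (c : α) :
    P.H (fun _ => c) = 0 := by
  unfold FinProbSpace.H FinProbSpace.prob
  refine Finset.sum_eq_zero fun a _ => ?_
  by_cases h : c = a
  · simp [h, P.sum_one]
  · simp [h]

/-- `H(X,Y) ≥ H(Y)`, i.e. conditional entropy is nonnegative. -/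
lemma condH_nonneg {α β : Type} [Fintype α] [DecidableEq α] [Fintype β] [DecidableEq β]
    (X : P.Ω → α) (Y : P.Ω → β) : 0 ≤ P.condH X Y := by
  have := H_comp_le (P := P) (X := fun ω => (X ω, Y ω)) (Y := Y) Prod.snd (fun ω => rfl)
  unfold FinProbSpace.condH
  linarith

/-- If `X` is a function of `Y` then `H(X|Y) = 0`. -/
lemma condH_eq_zero {α β : Type} [Fintype α] [DecidableEq α] [Fintype β] [DecidableEq β]
    {X : P.Ω → α} {Y : P.Ω → β} (f : β → α) (h : ∀ ω, X ω = f (Y ω)) :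
    P.condH X Y = 0 := by
  unfold FinProbSpace.condH
  rw [H_congr (P := P) (X := fun ω => (X ω, Y ω)) (Y := Y) Prod.snd
    (fun b => (f b, b)) (fun ω => rfl) (fun ω => by simp [h ω])]
  ring

end FinProbSpace
namespace FinProbSpace

open Finset Real

variable {P : FinProbSpace}

lemma negMulLog_eq_sum {α : Type} {s : Finset α} {g : α → ℝ} {q : ℝ}
    (hq : q = ∑ a ∈ s, g a) :
    Real.negMulLog q = ∑ a ∈ s, -(g a * Real.log q) := by
  rw [Real.negMulLog, hq, neg_mul, Finset.sum_mul, ← Finset.sum_neg_distrib]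

private lemma sum3_rot {A B C : Type} [Fintype A] [Fintype B] [Fintype C]
    (f : A → B → C → ℝ) :
    ∑ x, ∑ y, ∑ z, f x y z = ∑ z, ∑ x, ∑ y, f x y z := by
  calc ∑ x, ∑ y, ∑ z, f x y z = ∑ x, ∑ z, ∑ y, f x y z :=
        Finset.sum_congr rfl fun x _ => Finset.sum_comm
    _ = ∑ z, ∑ x, ∑ y, f x y z := Finset.sum_comm

private lemma sum3_add {A B C : Type} [Fintype A] [Fintype B] [Fintype C]
    (f g : A → B → C → ℝ) :
    (∑ z, ∑ x, ∑ y, f z x y) + (∑ z, ∑ x, ∑ y, g z x y)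
      = ∑ z, ∑ x, ∑ y, (f z x y + g z x y) := by
  rw [← Finset.sum_add_distrib]
  refine Finset.sum_congr rfl fun z _ => ?_
  rw [← Finset.sum_add_distrib]
  exact Finset.sum_congr rfl fun x _ => (Finset.sum_add_distrib).symm

private lemma sum3_sub {A B C : Type} [Fintype A] [Fintype B] [Fintype C]
    (f g : A → B → C → ℝ) :
    (∑ z, ∑ x, ∑ y, f z x y) - (∑ z, ∑ x, ∑ y, g z x y)
      = ∑ z, ∑ x, ∑ y, (f z x y - g z x y) := by
  rw [← Finset.sum_sub_distrib]
  refine Finset.sum_congr rfl fun z _ => ?_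
  rw [← Finset.sum_sub_distrib]
  exact Finset.sum_congr rfl fun x _ => (Finset.sum_sub_distrib _ _).symm

private lemma sum3_le {A B C : Type} [Fintype A] [Fintype B] [Fintype C]
    {f g : A → B → C → ℝ} (h : ∀ z x y, f z x y ≤ g z x y) :
    ∑ z, ∑ x, ∑ y, f z x y ≤ ∑ z, ∑ x, ∑ y, g z x y :=
  Finset.sum_le_sum fun z _ => Finset.sum_le_sum fun x _ =>
    Finset.sum_le_sum fun y _ => h z x y

private lemma gibbs_term (p a b c : ℝ) (hp : 0 ≤ p) (ha : p ≤ a) (hb : p ≤ b)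
    (hc : p ≤ c) :
    (Real.negMulLog p + -(p * Real.log c)) - (-(p * Real.log a) + -(p * Real.log b))
      ≤ (if p = 0 then 0 else a * b / c) - p := by
  rcases eq_or_lt_of_le hp with h0 | hpos
  · simp [← h0]
  · have hA : 0 < a := lt_of_lt_of_le hpos ha
    have hB : 0 < b := lt_of_lt_of_le hpos hb
    have hC : 0 < c := lt_of_lt_of_le hpos hc
    rw [if_neg (ne_of_gt hpos)]
    have hu : 0 < a * b / (p * c) := by positivity
    have hlog : Real.log (a * b / (p * c)) = Real.log a + Real.log b
        - Real.log p - Real.log c := by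
      rw [Real.log_div (by positivity) (by positivity), Real.log_mul (ne_of_gt hA)
        (ne_of_gt hB), Real.log_mul (ne_of_gt hpos) (ne_of_gt hC)]
      ring
    have hineq := Real.log_le_sub_one_of_pos hu
    have h2 : p * Real.log (a * b / (p * c)) ≤ p * (a * b / (p * c) - 1) :=
      mul_le_mul_of_nonneg_left hineq hp
    have h3 : p * (a * b / (p * c) - 1) = a * b / c - p := by
      field_simp
    rw [hlog] at h2
    rw [Real.negMulLog]
    nlinarith [h2, h3]

/-- Key technical inequality (Gibbs): submodularity of entropy at the level of sums. -/
private lemma gibbs {A B C : Type} [Fintype A] [Fintype B] [Fintype C]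
    (p3 : C → A → B → ℝ) (pXZ : A → C → ℝ) (pYZ : B → C → ℝ) (pZ : C → ℝ)
    (h0 : ∀ z x y, 0 ≤ p3 z x y)
    (hXZ : ∀ x z, ∑ y, p3 z x y = pXZ x z)
    (hYZ : ∀ y z, ∑ x, p3 z x y = pYZ y z)
    (hZ : ∀ z, ∑ x, pXZ x z = pZ z)
    (hone : ∑ z, pZ z = 1) :
    ∑ z, ∑ x, ∑ y, (Real.negMulLog (p3 z x y) + -(p3 z x y * Real.log (pZ z)))
      ≤ ∑ z, ∑ x, ∑ y, (-(p3 z x y * Real.log (pXZ x z))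
          + -(p3 z x y * Real.log (pYZ y z))) := by
  have hpXZ : ∀ x z, 0 ≤ pXZ x z := fun x z => (hXZ x z) ▸
    Finset.sum_nonneg fun y _ => h0 z x y
  have hpYZ : ∀ y z, 0 ≤ pYZ y z := fun y z => (hYZ y z) ▸
    Finset.sum_nonneg fun x _ => h0 z x y
  have hpZ : ∀ z, 0 ≤ pZ z := fun z => (hZ z) ▸ Finset.sum_nonneg fun x _ => hpXZ x z
  have hdomA : ∀ z x y, p3 z x y ≤ pXZ x z := fun z x y => (hXZ x z) ▸
    Finset.single_le_sum (fun y' _ => h0 z x y') (mem_univ y)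
  have hdomB : ∀ z x y, p3 z x y ≤ pYZ y z := fun z x y => (hYZ y z) ▸
    Finset.single_le_sum (fun x' _ => h0 z x' y) (mem_univ x)
  have hdomC : ∀ z x y, p3 z x y ≤ pZ z := fun z x y =>
    le_trans (hdomA z x y) ((hZ z) ▸ Finset.single_le_sum
      (fun x' _ => hpXZ x' z) (mem_univ x))
  -- Σ p3 = 1
  have hsum : ∑ z, ∑ x, ∑ y, p3 z x y = 1 := by
    rw [← hone]
    refine Finset.sum_congr rfl fun z _ => ?_
    rw [← hZ z]
    exact Finset.sum_congr rfl fun x _ => hXZ x z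
  -- termwise bound
  have key : ∀ z x y,
      (Real.negMulLog (p3 z x y) + -(p3 z x y * Real.log (pZ z)))
        - (-(p3 z x y * Real.log (pXZ x z)) + -(p3 z x y * Real.log (pYZ y z)))
      ≤ (if p3 z x y = 0 then 0 else pXZ x z * pYZ y z / pZ z) - p3 z x y :=
    fun z x y => gibbs_term _ _ _ _ (h0 z x y) (hdomA z x y) (hdomB z x y)
      (hdomC z x y)
  have step1 : ∑ z, ∑ x, ∑ y,
      ((Real.negMulLog (p3 z x y) + -(p3 z x y * Real.log (pZ z)))
        - (-(p3 z x y * Real.log (pXZ x z)) + -(p3 z x y * Real.log (pYZ y z))))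
      ≤ ∑ z, ∑ x, ∑ y,
        ((if p3 z x y = 0 then 0 else pXZ x z * pYZ y z / pZ z) - p3 z x y) :=
    sum3_le key
  -- bound the ite sum
  have step2 : ∀ z x y, (if p3 z x y = 0 then 0 else pXZ x z * pYZ y z / pZ z)
      ≤ (if pZ z = 0 then 0 else pXZ x z * pYZ y z / pZ z) := by
    intro z x y
    by_cases h : p3 z x y = 0
    · rw [if_pos h]
      by_cases h2 : pZ z = 0
      · rw [if_pos h2]
      · rw [if_neg h2]
        have : 0 < pZ z := lt_of_le_of_ne (hpZ z) (Ne.symm h2)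
        exact div_nonneg (mul_nonneg (hpXZ x z) (hpYZ y z)) (le_of_lt this)
    · rw [if_neg h]
      have hp3 : 0 < p3 z x y := lt_of_le_of_ne (h0 z x y) (Ne.symm h)
      have : pZ z ≠ 0 := ne_of_gt (lt_of_lt_of_le hp3 (hdomC z x y))
      rw [if_neg this]
  have step3 : ∀ z, ∑ x, ∑ y, (if pZ z = 0 then 0 else pXZ x z * pYZ y z / pZ z)
      ≤ pZ z := by
    intro z
    by_cases h : pZ z = 0
    · simp [h, hpZ z]
    · have heq : ∑ x, ∑ y, (if pZ z = 0 then 0 else pXZ x z * pYZ y z / pZ z)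
          = (∑ x, pXZ x z) * (∑ y, pYZ y z) / pZ z := by
        simp only [if_neg h]
        rw [Finset.sum_mul, Finset.sum_div]
        refine Finset.sum_congr rfl fun x _ => ?_
        rw [Finset.mul_sum, Finset.sum_div]
      have hZ' : ∑ y, pYZ y z = pZ z := by
        rw [← hZ z]
        have : ∀ y, pYZ y z = ∑ x, p3 z x y := fun y => (hYZ y z).symm
        rw [Finset.sum_congr rfl fun y _ => this y, ← Finset.sum_comm]
        exact Finset.sum_congr rfl fun x _ => hXZ x z
      rw [heq, hZ z, hZ']
      have hzpos : pZ z ≠ 0 := h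
      rw [mul_div_assoc, div_self hzpos, mul_one]
  have step4 : ∑ z, ∑ x, ∑ y, (if p3 z x y = 0 then 0 else pXZ x z * pYZ y z / pZ z)
      ≤ 1 := by
    calc ∑ z, ∑ x, ∑ y, (if p3 z x y = 0 then 0 else pXZ x z * pYZ y z / pZ z)
        ≤ ∑ z, ∑ x, ∑ y, (if pZ z = 0 then 0 else pXZ x z * pYZ y z / pZ z) :=
          sum3_le step2
      _ ≤ ∑ z, pZ z := Finset.sum_le_sum fun z _ => step3 z
      _ = 1 := hone
  have hsplit : ∑ z, ∑ x, ∑ y,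
      ((if p3 z x y = 0 then 0 else pXZ x z * pYZ y z / pZ z) - p3 z x y)
      = (∑ z, ∑ x, ∑ y, (if p3 z x y = 0 then 0 else pXZ x z * pYZ y z / pZ z))
        - (∑ z, ∑ x, ∑ y, p3 z x y) := (sum3_sub _ _).symm
  have hLR : ∑ z, ∑ x, ∑ y,
      ((Real.negMulLog (p3 z x y) + -(p3 z x y * Real.log (pZ z)))
        - (-(p3 z x y * Real.log (pXZ x z)) + -(p3 z x y * Real.log (pYZ y z))))
      = (∑ z, ∑ x, ∑ y, (Real.negMulLog (p3 z x y) + -(p3 z x y * Real.log (pZ z))))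
        - (∑ z, ∑ x, ∑ y, (-(p3 z x y * Real.log (pXZ x z))
            + -(p3 z x y * Real.log (pYZ y z)))) := (sum3_sub _ _).symm
  rw [hLR, hsplit, hsum] at step1
  linarith

end FinProbSpace
namespace FinProbSpace

open Finset Real

variable {P : FinProbSpace}

lemma prob_pair_sum_fst {α β : Type} [Fintype α] [DecidableEq α] [DecidableEq β]
    (X : P.Ω → α) (Y : P.Ω → β) (b : β) :
    ∑ x, P.prob (fun ω => (X ω, Y ω)) (x, b) = P.prob Y b := by
  unfold FinProbSpace.prob
  rw [Finset.sum_comm]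
  refine Finset.sum_congr rfl fun ω _ => ?_
  by_cases h2 : Y ω = b
  · simp [h2, Prod.ext_iff]
  · simp [h2, Prod.ext_iff]

lemma prob_pair_sum_mid {α β γ : Type} [Fintype β] [DecidableEq α] [DecidableEq β]
    [DecidableEq γ] (X : P.Ω → α) (Y : P.Ω → β) (Z : P.Ω → γ) (x : α) (z : γ) :
    ∑ y, P.prob (fun ω => (X ω, (Y ω, Z ω))) (x, (y, z))
      = P.prob (fun ω => (X ω, Z ω)) (x, z) := by
  unfold FinProbSpace.prob
  rw [Finset.sum_comm]
  refine Finset.sum_congr rfl fun ω _ => ?_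
  by_cases h1 : X ω = x
  · by_cases h2 : Z ω = z
    · simp [h1, h2, Prod.ext_iff]
    · simp [h1, h2, Prod.ext_iff]
  · simp [h1, Prod.ext_iff]

/-- Submodularity of entropy: `H(X,Y,Z) + H(Z) ≤ H(X,Z) + H(Y,Z)` (natural log). -/
lemma Hn_submod {α β γ : Type} [Fintype α] [DecidableEq α] [Fintype β] [DecidableEq β]
    [Fintype γ] [DecidableEq γ] (X : P.Ω → α) (Y : P.Ω → β) (Z : P.Ω → γ) :
    P.Hn (fun ω => (X ω, (Y ω, Z ω))) + P.Hn Z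
      ≤ P.Hn (fun ω => (X ω, Z ω)) + P.Hn (fun ω => (Y ω, Z ω)) := by
  have e1 : P.Hn (fun ω => (X ω, (Y ω, Z ω)))
      = ∑ z, ∑ x, ∑ y, Real.negMulLog (P.prob (fun ω => (X ω, (Y ω, Z ω))) (x, (y, z))) := by
    rw [← sum3_rot]
    unfold FinProbSpace.Hn
    rw [Fintype.sum_prod_type]
    exact Finset.sum_congr rfl fun x _ => Fintype.sum_prod_type _
  have e2 : P.Hn (fun ω => (X ω, Z ω))
      = ∑ z, ∑ x, ∑ y, -(P.prob (fun ω => (X ω, (Y ω, Z ω))) (x, (y, z))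
          * Real.log (P.prob (fun ω => (X ω, Z ω)) (x, z))) := by
    rw [← Finset.sum_comm]
    unfold FinProbSpace.Hn
    rw [Fintype.sum_prod_type]
    refine Finset.sum_congr rfl fun x _ => Finset.sum_congr rfl fun z _ => ?_
    exact negMulLog_eq_sum (prob_pair_sum_mid X Y Z x z).symm
  have e3 : P.Hn (fun ω => (Y ω, Z ω))
      = ∑ z, ∑ x, ∑ y, -(P.prob (fun ω => (X ω, (Y ω, Z ω))) (x, (y, z))
          * Real.log (P.prob (fun ω => (Y ω, Z ω)) (y, z))) := by
    rw [← sum3_rot, ← sum3_rot]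
    unfold FinProbSpace.Hn
    rw [Fintype.sum_prod_type]
    refine Finset.sum_congr rfl fun y _ => Finset.sum_congr rfl fun z _ => ?_
    exact negMulLog_eq_sum (prob_pair_sum_fst X _ (y, z)).symm
  have e4 : P.Hn Z
      = ∑ z, ∑ x, ∑ y, -(P.prob (fun ω => (X ω, (Y ω, Z ω))) (x, (y, z))
          * Real.log (P.prob Z z)) := by
    unfold FinProbSpace.Hn
    refine Finset.sum_congr rfl fun z _ => ?_
    rw [negMulLog_eq_sum (prob_pair_sum_fst X Z z).symm]
    refine Finset.sum_congr rfl fun x _ => ?_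
    rw [← prob_pair_sum_mid X Y Z x z, Finset.sum_mul, ← Finset.sum_neg_distrib]
  rw [e1, e2, e3, e4, sum3_add, sum3_add]
  exact gibbs _ _ _ _ (fun z x y => prob_nonneg _ _)
    (fun x z => prob_pair_sum_mid X Y Z x z)
    (fun y z => prob_pair_sum_fst X _ (y, z))
    (fun z => prob_pair_sum_fst X Z z)
    (sum_prob Z)

/-- Conditioning on more variables decreases conditional entropy. -/
lemma condH_submod {α β γ : Type} [Fintype α] [DecidableEq α] [Fintype β] [DecidableEq β]
    [Fintype γ] [DecidableEq γ] (X : P.Ω → α) (Y : P.Ω → β) (Z : P.Ω → γ) :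
    P.condH X (fun ω => (Y ω, Z ω)) ≤ P.condH X Z := by
  unfold FinProbSpace.condH
  have h := Hn_submod (P := P) X Y Z
  have h2 : (0:ℝ) ≤ (Real.log 2)⁻¹ := by positivity
  rw [H_eq_Hn, H_eq_Hn, H_eq_Hn, H_eq_Hn]
  nlinarith [mul_le_mul_of_nonneg_left h h2]

lemma condH_congr_right {α β β' : Type} [Fintype α] [DecidableEq α] [Fintype β]
    [DecidableEq β] [Fintype β'] [DecidableEq β'] {X : P.Ω → α} {Y : P.Ω → β}
    {Y' : P.Ω → β'} (f : β → β') (g : β' → β)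
    (hY' : ∀ ω, Y' ω = f (Y ω)) (hY : ∀ ω, Y ω = g (Y' ω)) :
    P.condH X Y = P.condH X Y' := by
  unfold FinProbSpace.condH
  rw [H_congr (P := P) (X := fun ω => (X ω, Y ω)) (Y := fun ω => (X ω, Y' ω))
      (fun t => (t.1, f t.2)) (fun t => (t.1, g t.2))
      (fun ω => by simp [hY' ω]) (fun ω => by simp [← hY ω]),
    H_congr (P := P) (X := Y) (Y := Y') f g hY' hY]

lemma condH_congr_left {α α' β : Type} [Fintype α] [DecidableEq α] [Fintype α']
    [DecidableEq α'] [Fintype β] [DecidableEq β] {X : P.Ω → α} {X' : P.Ω → α'}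
    {Y : P.Ω → β} (f : α → α') (g : α' → α)
    (hX' : ∀ ω, X' ω = f (X ω)) (hX : ∀ ω, X ω = g (X' ω)) :
    P.condH X Y = P.condH X' Y := by
  unfold FinProbSpace.condH
  rw [H_congr (P := P) (X := fun ω => (X ω, Y ω)) (Y := fun ω => (X' ω, Y ω))
      (fun t => (f t.1, t.2)) (fun t => (g t.1, t.2))
      (fun ω => by simp [hX' ω]) (fun ω => by simp [← hX ω])]

lemma condH_mono_left {α α' β : Type} [Fintype α] [DecidableEq α] [Fintype α']
    [DecidableEq α'] [Fintype β] [DecidableEq β] {X : P.Ω → α} {X' : P.Ω → α'}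
    {Y : P.Ω → β} (f : α' → α) (hX : ∀ ω, X ω = f (X' ω)) :
    P.condH X Y ≤ P.condH X' Y := by
  unfold FinProbSpace.condH
  have := H_comp_le (P := P) (X := fun ω => (X' ω, Y ω)) (Y := fun ω => (X ω, Y ω))
    (fun t => (f t.1, t.2)) (fun ω => by simp [hX ω])
  linarith

/-- `H(X | Y, Z) ≤ H(X | Y)`. -/
lemma condH_pair_right_le {α β γ : Type} [Fintype α] [DecidableEq α] [Fintype β]
    [DecidableEq β] [Fintype γ] [DecidableEq γ] (X : P.Ω → α) (Y : P.Ω → β)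
    (Z : P.Ω → γ) : P.condH X (fun ω => (Y ω, Z ω)) ≤ P.condH X Y := by
  have h1 : P.condH X (fun ω => (Y ω, Z ω)) = P.condH X (fun ω => (Z ω, Y ω)) :=
    condH_congr_right (fun t => (t.2, t.1)) (fun t => (t.2, t.1))
      (fun ω => rfl) (fun ω => rfl)
  rw [h1]
  exact condH_submod X Z Y

/-- Chain rule: `H(X,Y | Z) = H(X | Y,Z) + H(Y | Z)`. -/
lemma condH_chain {α β γ : Type} [Fintype α] [DecidableEq α] [Fintype β] [DecidableEq β]
    [Fintype γ] [DecidableEq γ] (X : P.Ω → α) (Y : P.Ω → β) (Z : P.Ω → γ) :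
    P.condH (fun ω => (X ω, Y ω)) Z
      = P.condH X (fun ω => (Y ω, Z ω)) + P.condH Y Z := by
  unfold FinProbSpace.condH
  have h : P.H (fun ω => ((X ω, Y ω), Z ω)) = P.H (fun ω => (X ω, (Y ω, Z ω))) :=
    H_congr (fun t => (t.1.1, (t.1.2, t.2))) (fun t => ((t.1, t.2.1), t.2.2))
      (fun ω => rfl) (fun ω => rfl)
  rw [h]
  ring

/-- Conditional subadditivity for a pair. -/
lemma condH_pair_le {α β γ : Type} [Fintype α] [DecidableEq α] [Fintype β] [DecidableEq β]
    [Fintype γ] [DecidableEq γ] (X : P.Ω → α) (Y : P.Ω → β) (Z : P.Ω → γ) :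
    P.condH (fun ω => (X ω, Y ω)) Z ≤ P.condH X Z + P.condH Y Z := by
  rw [condH_chain]
  exact add_le_add_left (condH_submod X Y Z) _

/-- If `H(X|Y) = 0` then `H(X | Y,Z) = 0`. -/
lemma condH_pair_eq_zero {α β γ : Type} [Fintype α] [DecidableEq α] [Fintype β]
    [DecidableEq β] [Fintype γ] [DecidableEq γ] {X : P.Ω → α} {Y : P.Ω → β}
    {Z : P.Ω → γ} (h : P.condH X Y = 0) : P.condH X (fun ω => (Y ω, Z ω)) = 0 :=
  le_antisymm (h ▸ condH_pair_right_le X Y Z) (condH_nonneg _ _)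

/-- Entropy is additive for independent variables (factorizing distribution). -/
lemma Hn_pair_indep {α β : Type} [Fintype α] [DecidableEq α] [Fintype β] [DecidableEq β]
    {X : P.Ω → α} {Y : P.Ω → β}
    (h : ∀ x y, P.prob (fun ω => (X ω, Y ω)) (x, y) = P.prob X x * P.prob Y y) :
    P.Hn (fun ω => (X ω, Y ω)) = P.Hn X + P.Hn Y := by
  unfold FinProbSpace.Hn
  rw [Fintype.sum_prod_type]
  have : ∀ x y, Real.negMulLog (P.prob (fun ω => (X ω, Y ω)) (x, y))
      = P.prob Y y * Real.negMulLog (P.prob X x)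
        + P.prob X x * Real.negMulLog (P.prob Y y) := by
    intro x y; rw [h x y, Real.negMulLog_mul]
  calc ∑ x, ∑ y, Real.negMulLog (P.prob (fun ω => (X ω, Y ω)) (x, y))
      = ∑ x, ∑ y, (P.prob Y y * Real.negMulLog (P.prob X x)
        + P.prob X x * Real.negMulLog (P.prob Y y)) := by
        exact Finset.sum_congr rfl fun x _ => Finset.sum_congr rfl fun y _ => this x y
    _ = ∑ x, ((∑ y, P.prob Y y) * Real.negMulLog (P.prob X x)
        + P.prob X x * ∑ y, Real.negMulLog (P.prob Y y)) := by
        refine Finset.sum_congr rfl fun x _ => ?_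
        rw [Finset.sum_add_distrib, Finset.sum_mul, Finset.mul_sum]
    _ = P.Hn X + P.Hn Y := by
        rw [sum_prob]
        simp only [one_mul]
        rw [Finset.sum_add_distrib, ← Finset.sum_mul, sum_prob, one_mul]
        rfl
  
lemma H_pair_indep {α β : Type} [Fintype α] [DecidableEq α] [Fintype β] [DecidableEq β]
    {X : P.Ω → α} {Y : P.Ω → β}
    (h : ∀ x y, P.prob (fun ω => (X ω, Y ω)) (x, y) = P.prob X x * P.prob Y y) :
    P.H (fun ω => (X ω, Y ω)) = P.H X + P.H Y := by
  rw [H_eq_Hn, H_eq_Hn, H_eq_Hn, Hn_pair_indep h]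
  ring

end FinProbSpace
namespace FinProbSpace

open Finset Real

variable {P : FinProbSpace}

lemma condH_const {α β : Type} [Fintype α] [DecidableEq α] [Fintype β] [DecidableEq β]
    (X : P.Ω → α) (c : β) : P.condH X (fun _ => c) = P.H X := by
  unfold FinProbSpace.condH
  rw [H_congr (P := P) (X := fun ω => (X ω, c)) (Y := X) Prod.fst (fun x => (x, c))
    (fun ω => rfl) (fun ω => rfl), H_const]
  ring

/-- Conditional subadditivity for tuples over a `Finset`. -/
lemma condH_tuple_finset_le {ι V' γ : Type} [Fintype ι] [DecidableEq ι] [Fintype V']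
    [DecidableEq V'] [Fintype γ] [DecidableEq γ] (X : ι → P.Ω → V') (Z : P.Ω → γ)
    (s : Finset ι) :
    P.condH (fun ω => fun i : {x // x ∈ s} => X i.1 ω) Z
      ≤ ∑ n ∈ s, P.condH (X n) Z := by
  classical
  induction s using Finset.induction_on with
  | empty =>
      rw [condH_eq_zero (fun _ => fun i : {x // x ∈ (∅ : Finset ι)} =>
        absurd i.2 (Finset.notMem_empty i.1))
        (fun ω => funext fun i => absurd i.2 (Finset.notMem_empty i.1))]
      simp
  | @insert a s ha ih =>
      have recode : P.condH (fun ω => fun i : {x // x ∈ insert a s} => X i.1 ω) Z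
          = P.condH (fun ω => (X a ω, fun i : {x // x ∈ s} => X i.1 ω)) Z := by
        refine condH_congr_left
          (fun t => (t ⟨a, Finset.mem_insert_self a s⟩,
            fun i => t ⟨i.1, Finset.mem_insert_of_mem i.2⟩))
          (fun u => fun i => if h : i.1 = a then u.1
            else u.2 ⟨i.1, (Finset.mem_insert.mp i.2).resolve_left h⟩)
          (fun ω => rfl) (fun ω => funext fun i => ?_)
        show X i.1 ω = dite ((i : ι) = a) (fun _ => X a ω) (fun h => X i.1 ω)
        by_cases h : (i : ι) = a
        · rw [dif_pos h, h]
        · rw [dif_neg h]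
      rw [recode, Finset.sum_insert ha]
      exact le_trans (condH_pair_le _ _ _) (add_le_add_right ih _)

/-- Conditional subadditivity for the full tuple. -/
lemma condH_tuple_le {ι V' γ : Type} [Fintype ι] [DecidableEq ι] [Fintype V']
    [DecidableEq V'] [Fintype γ] [DecidableEq γ] (X : ι → P.Ω → V') (Z : P.Ω → γ) :
    P.condH (P.tuple X) Z ≤ ∑ n, P.condH (X n) Z := by
  have h : P.condH (P.tuple X) Z
      = P.condH (fun ω => fun i : {x // x ∈ (univ : Finset ι)} => X i.1 ω) Z :=
    condH_congr_left (fun t => fun i : {x // x ∈ (univ : Finset ι)} => t i.1)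
      (fun t => fun i => t ⟨i, mem_univ i⟩) (fun ω => rfl) (fun ω => rfl)
  rw [h]
  exact condH_tuple_finset_le X Z univ

/-- A coordinate has smaller conditional entropy than the tuple. -/
lemma condH_coord_le {ι V' γ : Type} [Fintype ι] [DecidableEq ι] [Fintype V']
    [DecidableEq V'] [Fintype γ] [DecidableEq γ] (X : ι → P.Ω → V') (Z : P.Ω → γ)
    (n : ι) : P.condH (X n) Z ≤ P.condH (P.tuple X) Z :=
  condH_mono_left (fun t => t n) (fun ω => rfl)

/-- Probability of an event given by coordinatewise constraints, for jointly
independent variables. -/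
lemma prob_constraints {K : ℕ} {V : Type} [Fintype V] [DecidableEq V]
    {W : Fin K → P.Ω → V} (hind : P.iIndep W) {β : Type} [DecidableEq β]
    {Xv : P.Ω → β} (f : (Fin K → V) → β) (hXv : ∀ ω, Xv ω = f (P.tuple W ω)) (b : β)
    (c : Fin K → Option V)
    (hc : ∀ a : Fin K → V, f a = b ↔ ∀ i v, c i = some v → a i = v) :
    P.prob Xv b = ∏ i, Option.elim (c i) 1 (fun v => P.prob (W i) v) := by
  classical
  rw [prob_comp f hXv b, Finset.sum_filter]
  have key : ∀ a : Fin K → V, (if f a = b then P.prob (P.tuple W) a else 0)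
      = ∏ i, (if (∀ v, c i = some v → a i = v) then P.prob (W i) (a i) else 0) := by
    intro a
    by_cases h : f a = b
    · rw [if_pos h, hind a]
      exact Finset.prod_congr rfl fun i _ => (if_pos fun v hv => (hc a).mp h i v hv).symm
    · rw [if_neg h]
      have h2 : ¬ ∀ i v, c i = some v → a i = v := fun hall => h ((hc a).mpr hall)
      push_neg at h2
      obtain ⟨i, v, hcv, hav⟩ := h2
      refine (Finset.prod_eq_zero (mem_univ i) ?_).symm
      exact if_neg fun hall => hav (hall v hcv)
  rw [Finset.sum_congr rfl (fun a _ => key a)]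
  refine Eq.trans (Fintype.prod_sum (fun (i : Fin K) (v : V) =>
    if (∀ v', c i = some v' → v = v') then P.prob (W i) v else 0)).symm
    (Finset.prod_congr rfl fun i _ => ?_)
  rcases hci : c i with _ | w
  · simp only [hci, Option.elim]
    rw [Finset.sum_congr rfl (fun v _ => if_pos (fun v' hv' => by simp at hv'))]
    exact sum_prob (W i)
  · simp only [hci, Option.elim]
    have : ∀ v : V, (if (∀ v', (some w : Option V) = some v' → v = v')
        then P.prob (W i) v else 0) = (if v = w then P.prob (W i) v else 0) := by
      intro v
      by_cases hvw : v = w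
      · rw [if_pos hvw, if_pos]
        intro v' hv'
        rw [hvw, Option.some_inj.mp hv']
      · rw [if_neg hvw, if_neg]
        intro hall
        exact hvw (hall w rfl)
    rw [Finset.sum_congr rfl fun v _ => this v]
    rw [Finset.sum_ite_eq' univ w (fun v => P.prob (W i) v)]
    simp

end FinProbSpace
namespace IRConverse

open Finset Real FinProbSpace

variable {K N : ℕ} {Mn : Fin N → ℕ} {Lw Lx : ℝ}

/-- The tuple of the first `j` messages. -/
def Zc (C : IRScheme K N Mn Lw Lx) (j : ℕ) :
    C.P.Ω → ({i : Fin K // i.1 < j} → C.V) := fun ω i => C.W i.1 ω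

lemma condH_Zc_zero (C : IRScheme K N Mn Lw Lx) {α : Type} [Fintype α] [DecidableEq α]
    (X : C.P.Ω → α) : C.P.condH X (Zc C 0) = C.P.H X := by
  have hz : Zc C 0 = fun _ => (fun i : {i : Fin K // i.1 < 0} =>
      absurd i.2 (Nat.not_lt_zero i.1.1)) := by
    funext ω i
    exact absurd i.2 (Nat.not_lt_zero i.1.1)
  rw [hz, condH_const]

/-- Factorization of a fresh message against the first `j` messages. -/
lemma prob_pair_Zc (C : IRScheme K N Mn Lw Lx) {j : ℕ} (hj : j < K)
    (x : C.V) (g : {i : Fin K // i.1 < j} → C.V) :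
    C.P.prob (fun ω => (C.W ⟨j, hj⟩ ω, Zc C j ω)) (x, g)
      = C.P.prob (C.W ⟨j, hj⟩) x * C.P.prob (Zc C j) g := by
  classical
  set k : Fin K := ⟨j, hj⟩ with hk
  have hkv : k.1 = j := rfl
  have hkj : ¬ (k.1 < j) := by omega
  set c1 : Fin K → Option C.V := fun i => if h : i.1 < j then some (g ⟨i, h⟩) else none
    with hc1def
  set c2 : Fin K → Option C.V := fun i => if h : i.1 < j then some (g ⟨i, h⟩)
    else if i = k then some x else none with hc2def
  have e2 : C.P.prob (fun ω => (C.W k ω, Zc C j ω)) (x, g)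
      = ∏ i, Option.elim (c2 i) 1 (fun v => C.P.prob (C.W i) v) := by
    refine prob_constraints C.indep (fun a => (a k, fun i => a i.1))
      (fun ω => rfl) (x, g) c2 (fun a => ?_)
    constructor
    · intro h i v hv
      have h1 : a k = x := (Prod.ext_iff.mp h).1
      have h2 : (fun i : {i : Fin K // i.1 < j} => a i.1) = g := (Prod.ext_iff.mp h).2
      by_cases hij : i.1 < j
      · rw [hc2def] at hv
        simp only [dif_pos hij] at hv
        rw [← Option.some_inj.mp hv]
        exact congrFun h2 ⟨i, hij⟩
      · rw [hc2def] at hv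
        simp only [dif_neg hij] at hv
        by_cases hik : i = k
        · rw [if_pos hik] at hv
          rw [hik, h1, ← Option.some_inj.mp hv]
        · rw [if_neg hik] at hv
          cases hv
    · intro hall
      refine Prod.ext_iff.mpr ⟨?_, funext fun i => ?_⟩
      · refine hall k x ?_
        rw [hc2def]
        simp only [dif_neg hkj, if_pos rfl]
        simp
      · refine hall i.1 (g i) ?_
        rw [hc2def]
        simp only [dif_pos i.2, Subtype.coe_eta]
  have e1 : C.P.prob (Zc C j) g
      = ∏ i, Option.elim (c1 i) 1 (fun v => C.P.prob (C.W i) v) := by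
    refine prob_constraints C.indep (fun a => fun i : {i : Fin K // i.1 < j} => a i.1)
      (fun ω => rfl) g c1 (fun a => ?_)
    constructor
    · intro h i v hv
      by_cases hij : i.1 < j
      · rw [hc1def] at hv
        simp only [dif_pos hij] at hv
        rw [← Option.some_inj.mp hv]
        exact congrFun h ⟨i, hij⟩
      · rw [hc1def] at hv
        simp only [dif_neg hij] at hv
        cases hv
    · intro hall
      funext i
      refine hall i.1 (g i) ?_
      rw [hc1def]
      simp only [dif_pos i.2, Subtype.coe_eta]
  have hc2k : Option.elim (c2 k) 1 (fun v => C.P.prob (C.W k) v) = C.P.prob (C.W k) x := by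
    rw [hc2def]
    simp only [dif_neg hkj]
    simp
  have hc1k : Option.elim (c1 k) 1 (fun v => C.P.prob (C.W k) v) = 1 := by
    rw [hc1def]
    simp only [dif_neg hkj]
    simp
  have hoff : ∀ i ∈ univ.erase k, Option.elim (c2 i) 1 (fun v => C.P.prob (C.W i) v)
      = Option.elim (c1 i) 1 (fun v => C.P.prob (C.W i) v) := by
    intro i hi
    have hik : i ≠ k := (Finset.mem_erase.mp hi).1
    rw [hc1def, hc2def]
    by_cases hij : i.1 < j
    · simp only [dif_pos hij]
    · simp only [dif_neg hij, if_neg hik]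
  rw [e1, e2, ← Finset.mul_prod_erase univ _ (mem_univ k),
    ← Finset.mul_prod_erase univ (fun i => Option.elim (c1 i) 1
      (fun v => C.P.prob (C.W i) v)) (mem_univ k), hc2k, hc1k, one_mul,
    Finset.prod_congr rfl hoff]

/-- Entropy of message prefixes grows by `Lw` each step. -/
lemma H_Zc_succ (C : IRScheme K N Mn Lw Lx) {j : ℕ} (hj : j < K) :
    C.P.H (Zc C (j + 1)) = C.P.H (Zc C j) + Lw := by
  classical
  set k : Fin K := ⟨j, hj⟩ with hk
  have hkv : k.1 = j := rfl
  have hrec : C.P.H (Zc C (j + 1)) = C.P.H (fun ω => (C.W k ω, Zc C j ω)) := by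
    refine H_congr (fun t => (t ⟨k, by simp only [hkv]; omega⟩, fun i => t ⟨i.1, by omega⟩))
      (fun u => fun i => if h : i.1.1 < j then u.2 ⟨i.1, h⟩ else u.1)
      (fun ω => rfl) (fun ω => funext fun i => ?_)
    show C.W i.1 ω = dite (i.1.1 < j) (fun h => C.W i.1 ω) (fun h => C.W k ω)
    by_cases h : i.1.1 < j
    · rw [dif_pos h]
    · rw [dif_neg h]
      have : i.1 = k := Fin.ext (by simp only [hkv]; omega)
      rw [this]
  rw [hrec, H_pair_indep (fun x g => prob_pair_Zc C hj x g), C.HW k]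
  ring

/-- Chain step: conditioning a decoding set on one more message. -/
lemma condH_tuple_succ (C : IRScheme K N Mn Lw Lx) {j : ℕ} (hj : j < K)
    {q : (n : Fin N) → Fin (Mn n)} (hq : q ∈ C.Q ⟨j, hj⟩) :
    C.P.condH (C.P.tuple fun n => C.A n (q n)) (Zc C j)
      = Lw + C.P.condH (C.P.tuple fun n => C.A n (q n)) (Zc C (j + 1)) := by
  classical
  set k : Fin K := ⟨j, hj⟩ with hk
  have hkv : k.1 = j := rfl
  set Aq : C.P.Ω → (Fin N → C.V') := C.P.tuple fun n => C.A n (q n) with hAq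
  have hdec : C.P.condH (C.W k) (fun ω => (Aq ω, Zc C j ω)) = 0 :=
    condH_pair_eq_zero (C.decodes k q hq)
  have hrec : C.P.H (fun ω => (Aq ω, Zc C (j + 1) ω))
      = C.P.H (fun ω => (C.W k ω, (Aq ω, Zc C j ω))) := by
    refine H_congr
      (fun t => (t.2 ⟨k, by simp only [hkv]; omega⟩, (t.1, fun i => t.2 ⟨i.1, by omega⟩)))
      (fun u => (u.2.1, fun i => if h : i.1.1 < j then u.2.2 ⟨i.1, h⟩ else u.1))
      (fun ω => rfl) (fun ω => ?_)
    refine Prod.ext_iff.mpr ⟨rfl, funext fun i => ?_⟩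
    show Zc C (j+1) ω i = dite (i.1.1 < j) (fun h => Zc C j ω ⟨i.1, h⟩)
      (fun h => C.W k ω)
    by_cases h : i.1.1 < j
    · rw [dif_pos h]; rfl
    · rw [dif_neg h]
      show C.W i.1 ω = C.W k ω
      have : i.1 = k := Fin.ext (by simp only [hkv]; omega)
      rw [this]
  have hWk : C.P.H (fun ω => (C.W k ω, (Aq ω, Zc C j ω)))
      = C.P.H (fun ω => (Aq ω, Zc C j ω)) := by
    have := hdec
    unfold FinProbSpace.condH at this
    linarith
  unfold FinProbSpace.condH
  rw [hrec, hWk, H_Zc_succ C hj]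
  ring

end IRConverse
namespace IRConverse

open Finset Real FinProbSpace

variable {K N : ℕ} {Mn : Fin N → ℕ} {Lw Lx : ℝ}

lemma rir_upper (hK : 1 ≤ K) (hN : 2 ≤ N) (C : IRScheme K N Mn Lw Lx)
    (hrir : C.IsRIR) (hLx : Lx ≤ Lx) :
    Lw * (∑ i ∈ Finset.range K, (1 / (N : ℝ)) ^ i) ≤ N * Lx := by
  classical
  have hNpos : (0:ℝ) < N := by
    have : (0:ℕ) < N := by omega
    exact_mod_cast this
  obtain ⟨q₀, hq₀⟩ := C.Q_nonempty ⟨0, hK⟩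
  have hN0 : 0 < N := by omega
  have hne : (univ : Finset (Σ n : Fin N, Fin (Mn n))).Nonempty :=
    ⟨⟨⟨0, hN0⟩, q₀ ⟨0, hN0⟩⟩, mem_univ _⟩
  set g : ℕ → ℝ := fun j => Finset.sup' univ hne
    (fun σ : Σ n : Fin N, Fin (Mn n) => C.P.condH (C.A σ.1 σ.2) (Zc C j)) with hgdef
  have hg0 : ∀ j, 0 ≤ g j := by
    intro j
    obtain ⟨σ, hσ⟩ := hne
    exact le_trans (condH_nonneg _ _) (Finset.le_sup'
      (fun σ : Σ n : Fin N, Fin (Mn n) => C.P.condH (C.A σ.1 σ.2) (Zc C j)) hσ)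
  have hglx : g 0 ≤ Lx := by
    refine Finset.sup'_le _ _ fun σ _ => ?_
    rw [condH_Zc_zero, C.HA]
  have hstep : ∀ j, j < K → Lw + g (j + 1) ≤ N * g j := by
    intro j hj
    obtain ⟨σ, -, hσ⟩ := Finset.exists_mem_eq_sup' hne
      (fun σ : Σ n : Fin N, Fin (Mn n) => C.P.condH (C.A σ.1 σ.2) (Zc C (j + 1)))
    obtain ⟨q, hqQ, hqn⟩ := hrir σ.1 σ.2 ⟨j, hj⟩
    have hcoord : C.P.condH (C.A σ.1 σ.2) (Zc C (j + 1))
        ≤ C.P.condH (C.P.tuple fun n => C.A n (q n)) (Zc C (j + 1)) := by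
      have := condH_coord_le (P := C.P) (fun n => C.A n (q n)) (Zc C (j + 1)) σ.1
      rwa [hqn] at this
    have h1 : Lw + g (j + 1)
        ≤ C.P.condH (C.P.tuple fun n => C.A n (q n)) (Zc C j) := by
      rw [condH_tuple_succ C hj hqQ, hgdef]
      simp only []
      rw [← hσ] at hcoord
      linarith
    have h2 : C.P.condH (C.P.tuple fun n => C.A n (q n)) (Zc C j)
        ≤ ∑ n, C.P.condH (C.A n (q n)) (Zc C j) := condH_tuple_le _ _
    have h3 : ∑ n, C.P.condH (C.A n (q n)) (Zc C j) ≤ ∑ _n : Fin N, g j :=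
      Finset.sum_le_sum fun n _ => Finset.le_sup'
        (f := fun σ : Σ n : Fin N, Fin (Mn n) => C.P.condH (C.A σ.1 σ.2) (Zc C j))
        (mem_univ (⟨n, q n⟩ : Σ n : Fin N, Fin (Mn n)))
    have h4 : ∑ _n : Fin N, g j = N * g j := by
      rw [Finset.sum_const, Finset.card_univ, Fintype.card_fin, nsmul_eq_mul]
    linarith
  have main : ∀ d, d ≤ K →
      Lw / N * (∑ i ∈ Finset.range d, (1 / (N : ℝ)) ^ i) ≤ g (K - d) := by
    intro d
    induction d with
    | zero => intro _; simpa using hg0 K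
    | succ d ih =>
        intro hd
        have hdK : d ≤ K := by omega
        have hj : K - (d + 1) < K := by omega
        have hKd : K - (d + 1) + 1 = K - d := by omega
        have h1 := hstep (K - (d + 1)) hj
        rw [hKd] at h1
        have h2 := ih hdK
        have h3 : (Lw + g (K - d)) / N ≤ g (K - (d + 1)) := by
          rw [div_le_iff₀ hNpos]
          linarith
        have h4 : Lw / N * (∑ i ∈ Finset.range (d + 1), (1 / (N : ℝ)) ^ i)
            = (Lw + Lw / N * (∑ i ∈ Finset.range d, (1 / (N : ℝ)) ^ i)) / N := by
          rw [geom_sum_succ]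
          field_simp
          ring
        rw [h4]
        refine le_trans ?_ h3
        rw [div_le_div_iff₀ hNpos hNpos]
        have := mul_le_mul_of_nonneg_right h2 (le_of_lt hNpos)
        linarith
  have hfin := le_trans (main K (le_refl K)) (by simpa using hglx)
  rw [div_mul_eq_mul_div, div_le_iff₀ hNpos] at hfin
  linarith

end IRConverse
namespace IRConverse

open Finset Real FinProbSpace

variable {K N : ℕ} {Mn : Fin N → ℕ} {Lw Lx : ℝ}

lemma pir_upper (hK : 1 ≤ K) (hN : 2 ≤ N) (C : IRScheme K N Mn Lw Lx)
    (hpir : C.IsPIR) :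
    Lw * (∑ i ∈ Finset.range K, (1 / (N : ℝ)) ^ i) ≤ N * Lx := by
  classical
  have hNpos : (0:ℝ) < N := by
    have : (0:ℕ) < N := by omega
    exact_mod_cast this
  obtain ⟨μ, hμ0, hμ1, hμeq⟩ := hpir
  set k₀ : Fin K := ⟨0, hK⟩ with hk₀
  set wgt : (n : Fin N) → Fin (Mn n) → ℝ :=
    fun n m => ∑ q ∈ (C.Q k₀).filter (fun q => q n = m), μ k₀ q with hwgt
  set G : ℕ → ℝ := fun j => ∑ n, ∑ m, wgt n m * C.P.condH (C.A n m) (Zc C j)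
    with hGdef
  have hwnn : ∀ n m, 0 ≤ wgt n m := fun n m =>
    Finset.sum_nonneg fun q _ => hμ0 k₀ q
  have hwone : ∀ n, ∑ m, wgt n m = 1 := by
    intro n
    rw [hwgt]
    simp only []
    rw [Finset.sum_fiberwise (C.Q k₀) (fun q => q n) (fun q => μ k₀ q)]
    exact hμ1 k₀
  -- representation of G with respect to any message index
  have hrep : ∀ (k : Fin K) (j : ℕ),
      G j = ∑ q ∈ C.Q k, μ k q * ∑ n, C.P.condH (C.A n (q n)) (Zc C j) := by
    intro k j
    rw [hGdef]
    simp only []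
    have hn : ∀ n : Fin N,
        ∑ m, wgt n m * C.P.condH (C.A n m) (Zc C j)
          = ∑ q ∈ C.Q k, μ k q * C.P.condH (C.A n (q n)) (Zc C j) := by
      intro n
      rw [← Finset.sum_fiberwise (C.Q k) (fun q => q n)
        (fun q => μ k q * C.P.condH (C.A n (q n)) (Zc C j))]
      refine Finset.sum_congr rfl fun m _ => ?_
      rw [hwgt]
      simp only []
      rw [hμeq k₀ k n m, Finset.sum_mul]
      refine Finset.sum_congr rfl fun q hq => ?_
      rw [(Finset.mem_filter.mp hq).2]
    rw [Finset.sum_congr rfl fun n _ => hn n, Finset.sum_comm]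
    exact Finset.sum_congr rfl fun q _ => (Finset.mul_sum _ _ _).symm
  have hG0 : G 0 = N * Lx := by
    rw [hGdef]
    simp only []
    have : ∀ n : Fin N, ∑ m, wgt n m * C.P.condH (C.A n m) (Zc C 0) = Lx := by
      intro n
      have he : ∀ m, wgt n m * C.P.condH (C.A n m) (Zc C 0) = wgt n m * Lx := by
        intro m
        rw [condH_Zc_zero, C.HA]
      rw [Finset.sum_congr rfl fun m _ => he m, ← Finset.sum_mul, hwone, one_mul]
    rw [Finset.sum_congr rfl fun n _ => this n, Finset.sum_const, Finset.card_univ,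
      Fintype.card_fin, nsmul_eq_mul]
  have hGnn : ∀ j, 0 ≤ G j := by
    intro j
    refine Finset.sum_nonneg fun n _ => Finset.sum_nonneg fun m _ =>
      mul_nonneg (hwnn n m) (condH_nonneg _ _)
  have hstep : ∀ j, j < K → Lw + (1 / N) * G (j + 1) ≤ G j := by
    intro j hj
    set k : Fin K := ⟨j, hj⟩ with hk
    have hq : ∀ q ∈ C.Q k,
        Lw + (1 / N) * ∑ n, C.P.condH (C.A n (q n)) (Zc C (j + 1))
          ≤ ∑ n, C.P.condH (C.A n (q n)) (Zc C j) := by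
      intro q hqQ
      have h2 : ∑ n, C.P.condH (C.A n (q n)) (Zc C (j + 1))
          ≤ N * C.P.condH (C.P.tuple fun n => C.A n (q n)) (Zc C (j + 1)) := by
        have := Finset.sum_le_sum (fun n (_ : n ∈ univ) =>
          condH_coord_le (P := C.P) (fun n => C.A n (q n)) (Zc C (j + 1)) n)
        rw [Finset.sum_const, Finset.card_univ, Fintype.card_fin, nsmul_eq_mul] at this
        exact this
      have h3 : C.P.condH (C.P.tuple fun n => C.A n (q n)) (Zc C j)
          = Lw + C.P.condH (C.P.tuple fun n => C.A n (q n)) (Zc C (j + 1)) :=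
        condH_tuple_succ C hj hqQ
      have h4 : C.P.condH (C.P.tuple fun n => C.A n (q n)) (Zc C j)
          ≤ ∑ n, C.P.condH (C.A n (q n)) (Zc C j) := condH_tuple_le _ _
      have h5 : (1 / N) * ∑ n, C.P.condH (C.A n (q n)) (Zc C (j + 1))
          ≤ C.P.condH (C.P.tuple fun n => C.A n (q n)) (Zc C (j + 1)) := by
        rw [div_mul_eq_mul_div, one_mul, div_le_iff₀ hNpos]
        linarith [h2]
      linarith
    rw [hrep k j, hrep k (j + 1)]
    have expand : ∑ q ∈ C.Q k, μ k q *
        (Lw + (1 / N) * ∑ n, C.P.condH (C.A n (q n)) (Zc C (j + 1)))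
        ≤ ∑ q ∈ C.Q k, μ k q * ∑ n, C.P.condH (C.A n (q n)) (Zc C j) :=
      Finset.sum_le_sum fun q hqQ =>
        mul_le_mul_of_nonneg_left (hq q hqQ) (hμ0 k q)
    have lhs_eq : ∑ q ∈ C.Q k, μ k q *
        (Lw + (1 / N) * ∑ n, C.P.condH (C.A n (q n)) (Zc C (j + 1)))
        = Lw + (1 / N) * ∑ q ∈ C.Q k, μ k q *
            ∑ n, C.P.condH (C.A n (q n)) (Zc C (j + 1)) := by
      rw [Finset.mul_sum]
      have : ∀ q ∈ C.Q k, μ k q *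
          (Lw + (1 / N) * ∑ n, C.P.condH (C.A n (q n)) (Zc C (j + 1)))
          = μ k q * Lw + (1 / N) * (μ k q * ∑ n, C.P.condH (C.A n (q n))
              (Zc C (j + 1))) := by
        intro q _
        ring
      rw [Finset.sum_congr rfl this, Finset.sum_add_distrib, ← Finset.sum_mul,
        hμ1 k]
      ring
    rw [lhs_eq] at expand
    exact expand
  have main : ∀ d, d ≤ K →
      Lw * (∑ i ∈ Finset.range d, (1 / (N : ℝ)) ^ i) ≤ G (K - d) := by
    intro d
    induction d with
    | zero => intro _; simpa using hGnn K
    | succ d ih =>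
        intro hd
        have hdK : d ≤ K := by omega
        have hj : K - (d + 1) < K := by omega
        have hKd : K - (d + 1) + 1 = K - d := by omega
        have h1 := hstep (K - (d + 1)) hj
        rw [hKd] at h1
        have h2 := ih hdK
        have h3 : (1 / (N:ℝ)) * (Lw * ∑ i ∈ Finset.range d, (1 / (N : ℝ)) ^ i)
            ≤ (1 / N) * G (K - d) :=
          mul_le_mul_of_nonneg_left h2 (by positivity)
        have h4 : Lw * (∑ i ∈ Finset.range (d + 1), (1 / (N : ℝ)) ^ i)
            = Lw + (1 / N) * (Lw * ∑ i ∈ Finset.range d, (1 / (N : ℝ)) ^ i) := by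
          rw [geom_sum_succ]
          ring
        rw [h4]
        linarith
  have := main K (le_refl K)
  simp only [Nat.sub_self] at this
  rw [hG0] at this
  exact this

end IRConverse
namespace Achieve

open Finset Real FinProbSpace

/-- The uniform probability space on a finite nonempty type. -/
noncomputable def unif (Ω : Type) [Fintype Ω] [Nonempty Ω] : FinProbSpace where
  Ω := Ω
  p := fun _ => (Fintype.card Ω : ℝ)⁻¹
  nonneg := fun _ => by positivity
  sum_one := by
    rw [Finset.sum_const, Finset.card_univ, nsmul_eq_mul]
    have : (Fintype.card Ω : ℝ) ≠ 0 := Nat.cast_ne_zero.mpr Fintype.card_ne_zero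
    field_simp

lemma prob_unif {Ω : Type} [Fintype Ω] [Nonempty Ω] {β : Type} [DecidableEq β]
    (X : Ω → β) (b : β) :
    (unif Ω).prob X b
      = ((univ.filter (fun ω => X ω = b)).card : ℝ) * (Fintype.card Ω : ℝ)⁻¹ := by
  show (∑ ω : Ω, if X ω = b then (Fintype.card Ω : ℝ)⁻¹ else 0) = _
  rw [← Finset.sum_filter, Finset.sum_const, nsmul_eq_mul]

lemma prob_unif_hom {Ω β : Type} [Fintype Ω] [AddCommGroup Ω] [Nonempty Ω]
    [Fintype β] [AddCommGroup β] [DecidableEq β] (φ : Ω →+ β)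
    (hs : Function.Surjective φ) {X : Ω → β} (hX : ∀ ω, X ω = φ ω) (b : β) :
    (unif Ω).prob X b = (Fintype.card β : ℝ)⁻¹ := by
  classical
  obtain ⟨ω₀, hω₀⟩ := hs b
  have hequiv : {ω : Ω // φ ω = b} ≃ {ω : Ω // φ ω = 0} :=
    { toFun := fun x => ⟨x.1 - ω₀, by rw [map_sub, x.2, hω₀, sub_self]⟩
      invFun := fun y => ⟨y.1 + ω₀, by rw [map_add, y.2, zero_add, hω₀]⟩
      left_inv := fun x => Subtype.ext (by simp)
      right_inv := fun y => Subtype.ext (by simp) }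
  have hker : Nat.card {ω : Ω // φ ω = 0} = Nat.card φ.ker :=
    Nat.card_congr (Equiv.subtypeEquivRight fun x => (AddMonoidHom.mem_ker (f := φ) (x := x)).symm)
  have hquot : Nat.card (Ω ⧸ φ.ker) = Nat.card β :=
    Nat.card_congr (QuotientAddGroup.quotientKerEquivOfSurjective φ hs).toEquiv
  have hcard : Nat.card Ω = Nat.card β * Nat.card {ω : Ω // φ ω = b} := by
    rw [AddSubgroup.card_eq_card_quotient_mul_card_addSubgroup φ.ker, hquot,
      ← hker, Nat.card_congr hequiv]
  have hfilter : (univ.filter (fun ω => X ω = b)).card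
      = Nat.card {ω : Ω // φ ω = b} := by
    rw [Nat.card_eq_fintype_card, Fintype.card_subtype]
    congr 1
    refine Finset.filter_congr fun ω _ => ?_
    rw [hX ω]
  simp only [Nat.card_eq_fintype_card] at hcard hfilter
  rw [prob_unif, hfilter, hcard]
  have hβ' : (Fintype.card β : ℝ) ≠ 0 := by
    have : Nonempty β := ⟨φ 0⟩
    exact Nat.cast_ne_zero.mpr Fintype.card_ne_zero
  have hfib' : (Fintype.card {ω : Ω // φ ω = b} : ℝ) ≠ 0 := by
    have hΩ' : Fintype.card Ω ≠ 0 := Fintype.card_ne_zero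
    rw [hcard] at hΩ'
    exact Nat.cast_ne_zero.mpr fun h0 => hΩ' (by rw [h0, mul_zero])
  push_cast
  field_simp

lemma H_unif_hom {Ω β : Type} [Fintype Ω] [AddCommGroup Ω] [Nonempty Ω]
    [Fintype β] [AddCommGroup β] [DecidableEq β] (φ : Ω →+ β)
    (hs : Function.Surjective φ) {X : Ω → β} (hX : ∀ ω, X ω = φ ω) :
    (unif Ω).H X = Real.logb 2 (Fintype.card β) := by
  have hβ : (0:ℝ) < (Fintype.card β : ℝ) := by
    have : Nonempty β := ⟨φ 0⟩
    exact_mod_cast Fintype.card_pos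
  unfold FinProbSpace.H
  rw [Finset.sum_congr rfl fun b _ => by rw [prob_unif_hom φ hs hX b]]
  rw [Finset.sum_const, Finset.card_univ, nsmul_eq_mul, Real.logb_inv]
  field_simp

end Achieve
namespace Achieve

open Finset Real FinProbSpace

variable (κ ν : ℕ)

/-- Symbol index set of each message. -/
abbrev τt : Type := ZMod (ν+1) × (Fin (κ+1) → ZMod (ν+2))
/-- Message alphabet. -/
abbrev Vm : Type := τt κ ν → ZMod 2
/-- Query (answer index) space. -/
abbrev Qt : Type := Fin (κ+1) → ZMod (ν+2)
/-- Sample space: tuples of messages. -/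
abbrev Ωa : Type := Fin (κ+1) → Vm κ ν
/-- Answer alphabet. -/
abbrev Va : Type := {e : Qt κ ν // e ≠ 0} → ZMod 2

def ι (j : ZMod (ν+1)) : ZMod (ν+2) := ((j.val + 1 : ℕ) : ZMod (ν+2))
def ι' (c : ZMod (ν+2)) : ZMod (ν+1) := ((c.val - 1 : ℕ) : ZMod (ν+1))

lemma ι_ne_zero (j : ZMod (ν+1)) : ι ν j ≠ 0 := by
  unfold ι
  rw [Ne, ZMod.natCast_eq_zero_iff]
  intro hdvd
  have h1 := j.val_lt
  have h2 := Nat.le_of_dvd (by omega) hdvd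
  omega

lemma ι'_ι (j : ZMod (ν+1)) : ι' ν (ι ν j) = j := by
  unfold ι ι'
  have h1 := j.val_lt
  rw [ZMod.val_cast_of_lt (by omega)]
  simp only [Nat.add_sub_cancel]
  exact ZMod.natCast_rightInverse j

lemma ι_ι' (c : ZMod (ν+2)) (hc : c ≠ 0) : ι ν (ι' ν c) = c := by
  unfold ι ι'
  have h1 := c.val_lt
  have h2 : c.val ≠ 0 := fun h => hc ((ZMod.val_eq_zero c).mp h)
  rw [ZMod.val_cast_of_lt (by omega)]
  have h3 : c.val - 1 + 1 = c.val := by omega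
  rw [h3]
  exact ZMod.natCast_rightInverse c

/-- Index of message `k`'s symbol inside the component `e` of answer `m`. -/
def idx (m e : Qt κ ν) (k : Fin (κ+1)) : Qt κ ν :=
  fun k' => if k' = k then m k' else m k' + e k'

/-- Component `e` of the answer with index `m`. -/
def cmp (m e : Qt κ ν) (ω : Ωa κ ν) : ZMod 2 :=
  ∑ k, if e k = 0 then 0 else ω k (ι' ν (e k), idx κ ν m e k)

lemma cmp_add (m e : Qt κ ν) (ω ω' : Ωa κ ν) :
    cmp κ ν m e (ω + ω') = cmp κ ν m e ω + cmp κ ν m e ω' := by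
  unfold cmp
  rw [← Finset.sum_add_distrib]
  refine Finset.sum_congr rfl fun k _ => ?_
  by_cases h : e k = 0
  · simp [h]
  · simp [h, Pi.add_apply]

/-- The answer map as an additive homomorphism. -/
noncomputable def Φ (m : Qt κ ν) : Ωa κ ν →+ Va κ ν :=
  AddMonoidHom.mk' (fun ω => fun e => cmp κ ν m e.1 ω)
    (fun ω ω' => funext fun e => cmp_add κ ν m e.1 ω ω')

lemma Φ_apply (m : Qt κ ν) (ω : Ωa κ ν) (e : {e : Qt κ ν // e ≠ 0}) :
    Φ κ ν m ω e = cmp κ ν m e.1 ω := rfl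

/-- Cancellation: subtracting the aligned lower-order component isolates one symbol. -/
lemma cmp_cancel (k : Fin (κ+1)) (e m : Qt κ ν) (he : e k ≠ 0) (ω : Ωa κ ν) :
    cmp κ ν m e ω
      - cmp κ ν (m + Pi.single k (e k)) (e - Pi.single k (e k)) ω
      = ω k (ι' ν (e k), idx κ ν m e k) := by
  unfold cmp
  rw [← Finset.sum_sub_distrib]
  rw [Finset.sum_eq_single k]
  · rw [if_neg he]
    have h2 : (e - Pi.single k (e k) : Qt κ ν) k = 0 := by
      rw [Pi.sub_apply, Pi.single_eq_same, sub_self]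
    rw [if_pos h2, sub_zero]
  · intro k' _ hk'
    have he' : (e - Pi.single k (e k) : Qt κ ν) k' = e k' := by
      rw [Pi.sub_apply, Pi.single_eq_of_ne hk', sub_zero]
    rw [he']
    by_cases h : e k' = 0
    · simp [h]
    · rw [if_neg h, if_neg h]
      have hidx : idx κ ν (m + Pi.single k (e k)) (e - Pi.single k (e k)) k'
          = idx κ ν m e k' := by
        funext k''
        unfold idx
        by_cases h2 : k'' = k'
        · rw [if_pos h2, if_pos h2, Pi.add_apply]
          have : k'' ≠ k := by rw [h2]; exact hk'
          rw [Pi.single_eq_of_ne this, add_zero]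
        · rw [if_neg h2, if_neg h2, Pi.add_apply, Pi.sub_apply]
          ring
      rw [hidx, sub_self]
  · intro h
    exact absurd (mem_univ k) h

lemma cmp_e_zero (m : Qt κ ν) (ω : Ωa κ ν) : cmp κ ν m 0 ω = 0 := by
  unfold cmp
  simp

/-- Surjectivity of each answer map. -/
lemma Φ_surj (m : Qt κ ν) : Function.Surjective (Φ κ ν m) := by
  classical
  intro t
  set k0 : Qt κ ν → Fin (κ+1) := fun e =>
    if hne : (univ.filter fun k => e k ≠ 0).Nonempty
    then (univ.filter fun k => e k ≠ 0).min' hne else 0 with hk0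
  set efrom : Fin (κ+1) → ZMod (ν+1) → Qt κ ν → Qt κ ν := fun k j u =>
    fun k' => if k' = k then ι ν j else u k' - m k' with hefrom
  refine ⟨fun k p => if h : efrom k p.1 p.2 ≠ 0 ∧ k0 (efrom k p.1 p.2) = k
    then t ⟨efrom k p.1 p.2, h.1⟩ else 0, funext fun e => ?_⟩
  rw [Φ_apply]
  unfold cmp
  have hkey : ∀ k : Fin (κ+1), e.1 k ≠ 0 →
      efrom k (ι' ν (e.1 k)) (idx κ ν m e.1 k) = e.1 := by
    intro k hk
    funext k''
    rw [hefrom]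
    simp only []
    by_cases h2 : k'' = k
    · rw [if_pos h2, h2, ι_ι' ν (e.1 k) hk]
    · rw [if_neg h2]
      unfold idx
      rw [if_neg h2]
      ring
  have hfilter_ne : (univ.filter fun k => e.1 k ≠ 0).Nonempty := by
    obtain ⟨k, hk⟩ := Function.ne_iff.mp e.2
    exact ⟨k, Finset.mem_filter.mpr ⟨mem_univ k, hk⟩⟩
  have hk0mem : k0 e.1 ∈ univ.filter fun k => e.1 k ≠ 0 := by
    rw [hk0]
    simp only [dif_pos hfilter_ne]
    exact Finset.min'_mem _ _
  have hk0ne : e.1 (k0 e.1) ≠ 0 := (Finset.mem_filter.mp hk0mem).2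
  rw [Finset.sum_eq_single (k0 e.1)]
  · beta_reduce
    rw [if_neg hk0ne]
    rw [dif_pos]
    · congr 1
      exact Subtype.ext (hkey _ hk0ne)
    · refine ⟨?_, ?_⟩
      · rw [hkey _ hk0ne]; exact e.2
      · rw [hkey _ hk0ne]
  · intro k _ hk
    beta_reduce
    by_cases h : e.1 k = 0
    · rw [if_pos h]
    · rw [if_neg h, dif_neg]
      intro hcon
      rw [hkey _ h] at hcon
      exact hk hcon.2.symm
  · intro h
    exact absurd (mem_univ _) h

end Achieve
namespace Achieve

open Finset Real FinProbSpace

variable (κ ν : ℕ)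

/-- `n`-th query of the decoding line with offset `h` in direction `k`. -/
def lineq (k : Fin (κ+1)) (h : Qt κ ν) (n : Fin (ν+2)) : Qt κ ν :=
  h + Pi.single k ((n : ℕ) : ZMod (ν+2))

/-- `Fin` representative of an element of `ZMod (ν+2)`. -/
def fn (z : ZMod (ν+2)) : Fin (ν+2) := ⟨z.val, z.val_lt⟩

lemma fn_cast (z : ZMod (ν+2)) : (((fn ν z : Fin (ν+2)) : ℕ) : ZMod (ν+2)) = z :=
  ZMod.natCast_rightInverse z

lemma e1_ne_zero (k : Fin (κ+1)) (h : Qt κ ν) (j : ZMod (ν+1)) (u : Qt κ ν) :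
    (fun k' => if k' = k then ι ν j else u k' - h k' : Qt κ ν) ≠ 0 := by
  intro h0
  have := congrFun h0 k
  rw [if_pos rfl] at this
  exact ι_ne_zero ν j this

/-- The decoding function. -/
noncomputable def dec (k : Fin (κ+1)) (h : Qt κ ν) (t : Fin (ν+2) → Va κ ν) :
    Vm κ ν := fun p =>
  let e1 : Qt κ ν := fun k' => if k' = k then ι ν p.1 else p.2 k' - h k'
  t (fn ν (p.2 k - h k)) ⟨e1, e1_ne_zero κ ν k h p.1 p.2⟩
    - (if h2 : e1 - Pi.single k (ι ν p.1) = 0 then 0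
       else t (fn ν (p.2 k - h k + ι ν p.1)) ⟨e1 - Pi.single k (ι ν p.1), h2⟩)

set_option maxHeartbeats 1000000 in
/-- Correctness of decoding. -/
lemma dec_correct (k : Fin (κ+1)) (hq : Qt κ ν) (ω : Ωa κ ν) :
    ω k = dec κ ν k hq (fun n => fun e => cmp κ ν (lineq κ ν k hq n) e.1 ω) := by
  funext p
  obtain ⟨j, u⟩ := p
  set e1 : Qt κ ν := fun k' => if k' = k then ι ν j else u k' - hq k' with he1
  have he1k : e1 k = ι ν j := by rw [he1]; exact if_pos rfl
  have he1ne : ∀ k', k' ≠ k → e1 k' = u k' - hq k' := by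
    intro k' hk'
    rw [he1]
    exact if_neg hk'
  have he1kne : e1 k ≠ 0 := by rw [he1k]; exact ι_ne_zero ν j
  set m1 : Qt κ ν := lineq κ ν k hq (fn ν (u k - hq k)) with hm1
  have hm1k : m1 k = u k := by
    rw [hm1]
    unfold lineq
    rw [Pi.add_apply, Pi.single_eq_same, fn_cast]
    ring
  have hm1ne : ∀ k', k' ≠ k → m1 k' = hq k' := by
    intro k' hk'
    rw [hm1]
    unfold lineq
    rw [Pi.add_apply, Pi.single_eq_of_ne hk', add_zero]
  have hcancel := cmp_cancel κ ν k e1 m1 he1kne ω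
  have hsym : (ι' ν (e1 k), idx κ ν m1 e1 k) = (j, u) := by
    refine Prod.ext_iff.mpr ⟨by rw [he1k, ι'_ι], funext fun k'' => ?_⟩
    show (if k'' = k then m1 k'' else m1 k'' + e1 k'') = u k''
    by_cases h2 : k'' = k
    · rw [if_pos h2, h2, hm1k]
    · rw [if_neg h2, hm1ne k'' h2, he1ne k'' h2]
      ring
  have hm2 : m1 + Pi.single k (e1 k) = lineq κ ν k hq (fn ν (u k - hq k + ι ν j)) := by
    rw [hm1, he1k]
    unfold lineq
    rw [add_assoc, ← Pi.single_add, fn_cast, fn_cast]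
  rw [hsym, hm2, he1k] at hcancel
  show ω k (j, u)
      = cmp κ ν (lineq κ ν k hq (fn ν (u k - hq k))) e1 ω
        - (if h2 : e1 - Pi.single k (ι ν j) = 0 then 0
           else cmp κ ν (lineq κ ν k hq (fn ν (u k - hq k + ι ν j)))
             (e1 - Pi.single k (ι ν j)) ω)
  rw [← hm1]
  by_cases h2 : e1 - Pi.single k (ι ν j) = 0
  · rw [dif_pos h2]
    rw [h2, cmp_e_zero] at hcancel
    exact hcancel.symm
  · rw [dif_neg h2]
    exact hcancel.symm

end Achieve
namespace Achieve

open Finset Real FinProbSpace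

variable (κ ν : ℕ)

lemma card_Qt : Fintype.card (Qt κ ν) = (ν+2)^(κ+1) := by
  rw [Fintype.card_fun, ZMod.card, Fintype.card_fin]

lemma card_Vm : Fintype.card (Vm κ ν) = 2 ^ ((ν+1) * (ν+2)^(κ+1)) := by
  rw [Fintype.card_fun, ZMod.card, Fintype.card_prod, ZMod.card, card_Qt]

lemma card_Va : Fintype.card (Va κ ν) = 2 ^ ((ν+2)^(κ+1) - 1) := by
  rw [Fintype.card_fun, ZMod.card]
  congr 1
  have h1 : Fintype.card {e : Qt κ ν // e ≠ 0}
      = Fintype.card (Qt κ ν) - Fintype.card {e : Qt κ ν // e = 0} :=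
    Fintype.card_subtype_compl _
  rw [h1, card_Qt, Fintype.card_subtype_eq]

lemma logb_two_pow (t : ℕ) : Real.logb 2 ((2:ℕ) ^ t : ℕ) = (t : ℝ) := by
  push_cast
  rw [Real.logb_pow, Real.logb_self_eq_one (by norm_num)]
  ring

lemma HW_val (k : Fin (κ+1)) :
    (unif (Ωa κ ν)).H (fun ω => ω k) = (((ν+1) * (ν+2)^(κ+1) : ℕ) : ℝ) := by
  have hsurj : Function.Surjective (Pi.evalAddMonoidHom (fun _ : Fin (κ+1) => Vm κ ν) k) :=
    fun v => ⟨Pi.single k v, by simp⟩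
  have h := H_unif_hom (X := fun ω : Ωa κ ν => ω k)
    (Pi.evalAddMonoidHom (fun _ : Fin (κ+1) => Vm κ ν) k) hsurj (fun ω => rfl)
  refine h.trans ?_
  rw [card_Vm]
  exact logb_two_pow _

lemma HA_val (m : Qt κ ν) :
    (unif (Ωa κ ν)).H (fun ω => fun e : {e : Qt κ ν // e ≠ 0} => cmp κ ν m e.1 ω)
      = ((((ν+2)^(κ+1) - 1 : ℕ)) : ℝ) := by
  have h := H_unif_hom (X := fun ω => fun e : {e : Qt κ ν // e ≠ 0} =>
    cmp κ ν m e.1 ω) (Φ κ ν m) (Φ_surj κ ν m) (fun ω => rfl)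
  refine h.trans ?_
  rw [card_Va]
  exact logb_two_pow _

lemma indep_W : (unif (Ωa κ ν)).iIndep (fun k (ω : Ωa κ ν) => ω k) := by
  intro a
  have h1 : (unif (Ωa κ ν)).prob ((unif (Ωa κ ν)).tuple (fun k ω => ω k)) a
      = (Fintype.card (Ωa κ ν) : ℝ)⁻¹ :=
    prob_unif_hom (AddMonoidHom.id (Ωa κ ν)) Function.surjective_id
      (fun ω => rfl) a
  have h2 : ∀ k, (unif (Ωa κ ν)).prob (fun ω : Ωa κ ν => ω k) (a k)
      = (Fintype.card (Vm κ ν) : ℝ)⁻¹ := fun k =>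
    prob_unif_hom (Pi.evalAddMonoidHom (fun _ : Fin (κ+1) => Vm κ ν) k)
      (fun v => ⟨Pi.single k v, by simp⟩) (fun ω => rfl) (a k)
  refine h1.trans (Eq.symm ?_)
  simp only [h2]
  rw [Finset.prod_const, Finset.card_univ, Fintype.card_fin]
  have hca : Fintype.card (Ωa κ ν) = Fintype.card (Vm κ ν) ^ (κ+1) := by
    rw [Fintype.card_fun, Fintype.card_fin]
  rw [hca]
  push_cast
  rw [inv_pow]

/-- Identification of answer indices with `Fin`. -/
noncomputable def EQ : Fin ((ν+2)^(κ+1)) ≃ Qt κ ν :=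
  (Fintype.equivFinOfCardEq (card_Qt κ ν)).symm

/-- The explicit capacity-achieving scheme. -/
noncomputable def scheme : IRScheme (κ+1) (ν+2) (fun _ => (ν+2)^(κ+1))
    (((ν+1) * (ν+2)^(κ+1) : ℕ) : ℝ) ((((ν+2)^(κ+1) - 1 : ℕ)) : ℝ) where
  P := unif (Ωa κ ν)
  V := Vm κ ν
  V' := Va κ ν
  W := fun k ω => ω k
  A := fun _n m ω => fun e : {e : Qt κ ν // e ≠ 0} => cmp κ ν (EQ κ ν m) e.1 ω
  indep := indep_W κ ν
  HW := fun k => HW_val κ ν k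
  ans_fn := fun _n m => ⟨fun w => fun e : {e : Qt κ ν // e ≠ 0} =>
    cmp κ ν (EQ κ ν m) e.1 w, fun ω => rfl⟩
  HA := fun _n m => HA_val κ ν (EQ κ ν m)
  Q := fun k => Finset.image
    (fun h : Qt κ ν => fun n : Fin (ν+2) => (EQ κ ν).symm (lineq κ ν k h n)) univ
  Q_nonempty := fun k => Finset.Nonempty.image Finset.univ_nonempty _
  decodes := by
    intro k q hq
    obtain ⟨h, -, rfl⟩ := Finset.mem_image.mp hq
    refine condH_eq_zero (fun t => dec κ ν k h t) (fun ω => ?_)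
    have hco := congrFun (dec_correct κ ν k h ω)
    have harg : (unif (Ωa κ ν)).tuple (fun n => fun ω' =>
        fun e : {e : Qt κ ν // e ≠ 0} =>
          cmp κ ν (EQ κ ν ((EQ κ ν).symm (lineq κ ν k h n))) e.1 ω') ω
        = fun n => fun e : {e : Qt κ ν // e ≠ 0} =>
            cmp κ ν (lineq κ ν k h n) e.1 ω := by
      funext n e
      show cmp κ ν (EQ κ ν ((EQ κ ν).symm (lineq κ ν k h n))) e.1 ω = _
      rw [Equiv.apply_symm_apply]
    show ω k = dec κ ν k h _
    rw [harg]
    exact dec_correct κ ν k h ω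

lemma scheme_rir : (scheme κ ν).IsRIR := by
  intro n m k
  refine ⟨fun n' => (EQ κ ν).symm
    (lineq κ ν k (EQ κ ν m - Pi.single k ((n : ℕ) : ZMod (ν+2))) n'),
    Finset.mem_image.mpr ⟨_, mem_univ _, rfl⟩, ?_⟩
  show (EQ κ ν).symm (lineq κ ν k _ n) = m
  unfold lineq
  rw [sub_add_cancel, Equiv.symm_apply_apply]

lemma qfun_inj (k : Fin (κ+1)) : Function.Injective
    (fun h : Qt κ ν => fun n : Fin (ν+2) => (EQ κ ν).symm (lineq κ ν k h n)) := by
  intro h h' hhh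
  have := congrFun hhh ⟨0, by omega⟩
  simp only [] at this
  have h2 := (EQ κ ν).symm.injective this
  unfold lineq at h2
  simpa using h2

lemma qfun_filter (k : Fin (κ+1)) (n : Fin (ν+2)) (m : Fin ((ν+2)^(κ+1))) :
    ((scheme κ ν).Q k).filter (fun q => q n = m)
      = {fun n' => (EQ κ ν).symm
          (lineq κ ν k (EQ κ ν m - Pi.single k ((n : ℕ) : ZMod (ν+2))) n')} := by
  ext q
  simp only [Finset.mem_filter, Finset.mem_singleton]
  constructor
  · rintro ⟨hmem, hqn⟩
    obtain ⟨h, -, rfl⟩ := Finset.mem_image.mp hmem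
    have : lineq κ ν k h n = EQ κ ν m := by
      have := congrArg (EQ κ ν) hqn
      rwa [Equiv.apply_symm_apply] at this
    have hh : h = EQ κ ν m - Pi.single k ((n : ℕ) : ZMod (ν+2)) := by
      rw [← this]
      unfold lineq
      rw [add_sub_cancel_right]
    rw [hh]
  · rintro rfl
    refine ⟨Finset.mem_image.mpr ⟨_, mem_univ _, rfl⟩, ?_⟩
    show (EQ κ ν).symm (lineq κ ν k _ n) = m
    unfold lineq
    rw [sub_add_cancel, Equiv.symm_apply_apply]

lemma card_Qk (k : Fin (κ+1)) :
    ((scheme κ ν).Q k).card = (ν+2)^(κ+1) := by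
  show (Finset.image _ univ).card = _
  rw [Finset.card_image_of_injective _ (qfun_inj κ ν k), Finset.card_univ, card_Qt]

lemma scheme_pir : (scheme κ ν).IsPIR := by
  refine ⟨fun _ _ => (((ν+2:ℝ))^(κ+1))⁻¹, fun _ _ => by positivity, fun k => ?_, ?_⟩
  · rw [Finset.sum_const, card_Qk, nsmul_eq_mul]
    have : ((ν:ℝ)+2)^(κ+1) ≠ 0 := by positivity
    push_cast
    field_simp
  · intro k k' n m
    rw [qfun_filter, qfun_filter, Finset.sum_singleton, Finset.sum_singleton]

end Achieve
namespace Achieve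

open Finset Real

lemma rate_eq (κ ν : ℕ) :
    CK (ν+2) (κ+1)
      = (((ν+1) * (ν+2)^(κ+1) : ℕ) : ℝ)
        / (((ν+2 : ℕ) : ℝ) * ((((ν+2)^(κ+1) - 1 : ℕ)) : ℝ)) := by
  have hxpos : (0:ℝ) < (ν:ℝ) + 2 := by positivity
  have hS : (1:ℝ) < ((ν:ℝ) + 2) ^ (κ+1) :=
    one_lt_pow₀ (by linarith) (Nat.succ_ne_zero κ)
  have hSne : ((ν:ℝ) + 2) ^ (κ+1) ≠ 0 := by positivity
  have hpow : 1 ≤ (ν+2)^(κ+1) := Nat.one_le_pow _ _ (by omega)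
  have hx1 : (1:ℝ) / ((ν:ℝ) + 2) ≠ 1 := by
    rw [Ne, div_eq_one_iff_eq (ne_of_gt hxpos)]
    intro h
    linarith
  have hx1' : (1:ℝ) / ((ν:ℝ) + 2) - 1 ≠ 0 := sub_ne_zero.mpr hx1
  have hS1 : ((ν:ℝ) + 2) ^ (κ+1) - 1 ≠ 0 := sub_ne_zero.mpr (ne_of_gt hS)
  have hxm1 : ((ν:ℝ) + 2) - 1 ≠ 0 := by
    intro h
    have : (ν:ℝ) = -1 := by linarith [sub_eq_zero.mp h]
    have := Nat.cast_nonneg (α := ℝ) ν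
    linarith
  rw [CK]
  push_cast [Nat.cast_sub hpow]
  rw [geom_sum_eq hx1, div_pow, one_pow]
  have hs : (1 / ((ν:ℝ) + 2) ^ (κ+1) - 1) / (1 / ((ν:ℝ) + 2) - 1)
      = (((ν:ℝ) + 2) * (((ν:ℝ) + 2) ^ (κ+1) - 1))
        / ((((ν:ℝ) + 2) ^ (κ+1)) * (((ν:ℝ) + 2) - 1)) := by
    rw [div_eq_div_iff hx1' (by exact mul_ne_zero hSne hxm1)]
    field_simp
    ring
  rw [hs, inv_div]
  congr 1
  ring

end Achieve

section MainProof

open Finset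

lemma geom_ge_one (κ ν : ℕ) :
    1 ≤ ∑ j ∈ Finset.range (κ+1), (1 / ((ν+2 : ℕ) : ℝ)) ^ j := by
  have h := Finset.single_le_sum
    (f := fun j => (1 / ((ν+2 : ℕ) : ℝ)) ^ j)
    (fun j _ => by positivity) (Finset.mem_range.mpr (Nat.succ_pos κ))
  simpa using h

lemma upper_of_bound (κ ν : ℕ) {Lw Lx : ℝ} (hLx : 0 < Lx)
    (h : Lw * (∑ i ∈ Finset.range (κ+1), (1 / ((ν+2 : ℕ) : ℝ)) ^ i)
      ≤ ((ν+2 : ℕ) : ℝ) * Lx) :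
    Lw / (((ν+2 : ℕ) : ℝ) * Lx) ≤ CK (ν+2) (κ+1) := by
  have hN : (0:ℝ) < ((ν+2 : ℕ) : ℝ) := by
    exact_mod_cast (by omega : 0 < ν+2)
  have hs := geom_ge_one κ ν
  rw [CK, inv_eq_one_div, div_le_div_iff₀ (by positivity) (by linarith)]
  linarith

end MainProof
/-- Capacity of RIR_max, Corollary 2: for `N ≥ 2`, `K ≥ 1`, the supremum
of the rate `Lw / (N Lx)` over all RIR_max schemes equals `C_K(N)` and is attained; the
same holds for PIR_max schemes, so the capacity of RIR_max equals the capacity of PIR_max. -/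
theorem rir_capacity (K N : ℕ) (hK : 1 ≤ K) (hN : 2 ≤ N) :
    IsGreatest {r : ℝ | ∃ (Mn : Fin N → ℕ) (Lw Lx : ℝ), 0 < Lw ∧ 0 < Lx ∧
      ∃ C : IRScheme K N Mn Lw Lx, C.IsRIR ∧ r = Lw / (N * Lx)} (CK N K) ∧
    IsGreatest {r : ℝ | ∃ (Mn : Fin N → ℕ) (Lw Lx : ℝ), 0 < Lw ∧ 0 < Lx ∧
      ∃ C : IRScheme K N Mn Lw Lx, C.IsPIR ∧ r = Lw / (N * Lx)} (CK N K) := by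
  obtain ⟨κ, rfl⟩ : ∃ κ, K = κ + 1 := ⟨K - 1, by omega⟩
  obtain ⟨ν, rfl⟩ : ∃ ν, N = ν + 2 := ⟨N - 2, by omega⟩
  have hLwpos : (0:ℝ) < (((ν+1) * (ν+2)^(κ+1) : ℕ) : ℝ) := by
    have h : 0 < (ν+1) * (ν+2)^(κ+1) := by positivity
    exact_mod_cast h
  have hLxpos : (0:ℝ) < ((((ν+2)^(κ+1) - 1 : ℕ)) : ℝ) := by
    have h2 : 1 < (ν+2)^(κ+1) := Nat.one_lt_pow (Nat.succ_ne_zero κ) (by omega)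
    have h : 0 < (ν+2)^(κ+1) - 1 := by omega
    exact_mod_cast h
  constructor
  · constructor
    · exact ⟨fun _ => (ν+2)^(κ+1), _, _, hLwpos, hLxpos, Achieve.scheme κ ν,
        Achieve.scheme_rir κ ν, Achieve.rate_eq κ ν⟩
    · rintro r ⟨Mn, Lw, Lx, hLw, hLx, C, hrir, rfl⟩
      exact upper_of_bound κ ν hLx
        (IRConverse.rir_upper (by omega) (by omega) C hrir (le_refl _))
  · constructor
    · exact ⟨fun _ => (ν+2)^(κ+1), _, _, hLwpos, hLxpos, Achieve.scheme κ ν,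
        Achieve.scheme_pir κ ν, Achieve.rate_eq κ ν⟩
    · rintro r ⟨Mn, Lw, Lx, hLw, hLx, C, hpir, rfl⟩
      exact upper_of_bound κ ν hLx
        (IRConverse.pir_upper (by omega) (by omega) C hpir)
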